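/- Let p and q be relatively prime positive integers and let r be a real number with 0 < r < 1. Define h(z) = q(6 - 3r - 4r² + r³) + p(6 + 3r - 4r² - r³) + 2(3 - r²)(q(r - 1) + p(1 + r))z + r(p(3 + 2r - r²) - q(3 - 2r - r²))z², F(z) = (1 - z²)h(z) / (4pq(3 - r²)), and Θ(z) = F(z)/(1 + rz). Then: (i) Θ(z) > 0 for all z with -1 < z < 1; (ii) Θ(1) = 0 and Θ(-1) = 0; (iii) Θ has derivative 2/p at z = -1 and derivative -2/q at z = 1; and (iv) the second derivative of F vanishes at z = -1/r, i.e. F''(-1/r) = 0. (Hence every Kähler class on the orbifold (S_n, Δ_{pq}) admits an extremal Kähler metric.) -/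

import Mathlib

private lemma quartic_hasDerivAt (a0 a1 a2 a3 a4 x : ℝ) :
    HasDerivAt (fun z : ℝ => a0 + a1 * z + a2 * z ^ 2 + a3 * z ^ 3 + a4 * z ^ 4)
      (a1 + 2 * a2 * x + 3 * a3 * x ^ 2 + 4 * a4 * x ^ 3) x := by
  have h := ((((hasDerivAt_const x a0).add ((hasDerivAt_id x).const_mul a1)).add
    ((hasDerivAt_pow 2 x).const_mul a2)).add
    ((hasDerivAt_pow 3 x).const_mul a3)).add ((hasDerivAt_pow 4 x).const_mul a4)
  refine h.congr_deriv ?_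
  push_cast; ring

private lemma cubic_hasDerivAt (a0 a1 a2 a3 x : ℝ) :
    HasDerivAt (fun z : ℝ => a0 + a1 * z + a2 * z ^ 2 + a3 * z ^ 3)
      (a1 + 2 * a2 * x + 3 * a3 * x ^ 2) x := by
  have h := (((hasDerivAt_const x a0).add ((hasDerivAt_id x).const_mul a1)).add
    ((hasDerivAt_pow 2 x).const_mul a2)).add ((hasDerivAt_pow 3 x).const_mul a3)
  refine h.congr_deriv ?_
  push_cast; ring

set_option maxHeartbeats 1600000 in
/-- For relatively prime positive integers `p, q` and `0 < r < 1`, the extremal profile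
`Θ(z) = F(z)/(1+rz)` with `F(z) = (1-z²)h(z)/(4pq(3-r²))` satisfies the orbifold boundary
conditions `Θ > 0` on `(-1,1)`, `Θ(±1) = 0`, `Θ'(-1) = 2/p`, `Θ'(1) = -2/q`, and the
extremality condition `F''(-1/r) = 0`. Hence every Kähler class on the orbifold
`(S_n, Δ_{pq})` admits an extremal Kähler metric. -/
theorem orbifold_extremal_profile (p q : ℕ) (hp : 0 < p) (hq : 0 < q)
    (hpq : Nat.Coprime p q) (r : ℝ) (hr0 : 0 < r) (hr1 : r < 1)
    (h F Θ : ℝ → ℝ)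
    (hh : ∀ z : ℝ, h z =
      (q : ℝ) * (6 - 3 * r - 4 * r ^ 2 + r ^ 3) + (p : ℝ) * (6 + 3 * r - 4 * r ^ 2 - r ^ 3) +
        2 * (3 - r ^ 2) * ((q : ℝ) * (r - 1) + (p : ℝ) * (1 + r)) * z +
        r * ((p : ℝ) * (3 + 2 * r - r ^ 2) - (q : ℝ) * (3 - 2 * r - r ^ 2)) * z ^ 2)
    (hFdef : ∀ z : ℝ, F z = (1 - z ^ 2) * h z / (4 * (p : ℝ) * (q : ℝ) * (3 - r ^ 2)))
    (hΘdef : ∀ z : ℝ, Θ z = F z / (1 + r * z)) :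
    (∀ z : ℝ, -1 < z → z < 1 → 0 < Θ z) ∧
    Θ 1 = 0 ∧
    Θ (-1) = 0 ∧
    HasDerivAt Θ (2 / (p : ℝ)) (-1) ∧
    HasDerivAt Θ (-2 / (q : ℝ)) 1 ∧
    deriv (deriv F) (-1 / r) = 0 := by
  have hP : (0 : ℝ) < p := by exact_mod_cast hp
  have hQ : (0 : ℝ) < q := by exact_mod_cast hq
  have h3r : (0 : ℝ) < 3 - r ^ 2 := by nlinarith
  set A : ℝ := (q : ℝ) * (6 - 3 * r - 4 * r ^ 2 + r ^ 3) +
      (p : ℝ) * (6 + 3 * r - 4 * r ^ 2 - r ^ 3) with hA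
  set B : ℝ := 2 * (3 - r ^ 2) * ((q : ℝ) * (r - 1) + (p : ℝ) * (1 + r)) with hB
  set C : ℝ := r * ((p : ℝ) * (3 + 2 * r - r ^ 2) - (q : ℝ) * (3 - 2 * r - r ^ 2)) with hC
  set D : ℝ := 4 * (p : ℝ) * (q : ℝ) * (3 - r ^ 2) with hD
  have hDpos : 0 < D := by
    rw [hD]; nlinarith [mul_pos (mul_pos hP hQ) h3r]
  have hDne : D ≠ 0 := ne_of_gt hDpos
  have hFfun : F = fun z : ℝ =>
      A / D + (B / D) * z + ((C - A) / D) * z ^ 2 + (-B / D) * z ^ 3 + (-C / D) * z ^ 4 := by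
    funext z
    rw [hFdef z, hh z]
    field_simp
    ring
  have hG : ∀ x : ℝ, HasDerivAt (fun z : ℝ => 1 + r * z) r x := fun x => by
    simpa using ((hasDerivAt_id x).const_mul r).const_add 1
  have hFm1 : F (-1) = 0 := by rw [hFdef]; norm_num
  have hFp1 : F 1 = 0 := by rw [hFdef]; norm_num
  refine ⟨?_, ?_, ?_, ?_, ?_, ?_⟩
  · -- positivity
    intro z hz1 hz2
    rw [hΘdef, hFdef, hh]
    have hL1 : 0 < r * (3 + 2 * r - r ^ 2) * z + (6 + 3 * r - 4 * r ^ 2 - r ^ 3) := by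
      nlinarith [mul_pos (mul_pos hr0 (show (0:ℝ) < 3 + 2 * r - r ^ 2 by nlinarith))
        (show (0:ℝ) < z + 1 by linarith)]
    have hL2 : 0 < r * (3 - 2 * r - r ^ 2) * z + (6 - 3 * r - 4 * r ^ 2 + r ^ 3) := by
      nlinarith [mul_pos (mul_pos hr0 (show (0:ℝ) < 3 - 2 * r - r ^ 2 by nlinarith))
        (show (0:ℝ) < z + 1 by linarith), mul_pos (show (0:ℝ) < 1 - r by linarith) h3r]
    have hdec : A + B * z + C * z ^ 2 =
        (p : ℝ) * ((1 + z) * (r * (3 + 2 * r - r ^ 2) * z + (6 + 3 * r - 4 * r ^ 2 - r ^ 3))) +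
        (q : ℝ) * ((1 - z) * (r * (3 - 2 * r - r ^ 2) * z + (6 - 3 * r - 4 * r ^ 2 + r ^ 3))) := by
      rw [hA, hB, hC]; ring
    have hhz : 0 < A + B * z + C * z ^ 2 := by
      rw [hdec]
      have t1 := mul_pos hP (mul_pos (show (0:ℝ) < 1 + z by linarith) hL1)
      have t2 := mul_pos hQ (mul_pos (show (0:ℝ) < 1 - z by linarith) hL2)
      linarith
    have h1z : (0:ℝ) < 1 - z ^ 2 := by nlinarith
    have h1rz : (0:ℝ) < 1 + r * z := by
      nlinarith [mul_pos hr0 (show (0:ℝ) < z + 1 by linarith)]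
    exact div_pos (div_pos (mul_pos h1z hhz) hDpos) h1rz
  · rw [hΘdef, hFp1]; simp
  · rw [hΘdef, hFm1]; simp
  · -- derivative at -1
    have hne : (1 + r * (-1) : ℝ) ≠ 0 := by nlinarith
    have hF' : HasDerivAt F
        ((B / D) + 2 * ((C - A) / D) * (-1) + 3 * (-B / D) * (-1) ^ 2 + 4 * (-C / D) * (-1) ^ 3)
        (-1) := by
      rw [hFfun]; exact quartic_hasDerivAt _ _ _ _ _ _
    have key := hF'.div (hG (-1)) hne
    have hΘfun : Θ = fun z : ℝ => F z / (1 + r * z) := funext hΘdef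
    rw [hΘfun]
    have hval : ((B / D + 2 * ((C - A) / D) * (-1) + 3 * (-B / D) * (-1) ^ 2 +
          4 * (-C / D) * (-1) ^ 3) * (1 + r * (-1)) - F (-1) * r) / (1 + r * (-1)) ^ 2
        = 2 / (p : ℝ) := by
      have hpne : (p : ℝ) ≠ 0 := hP.ne'
      have hqne : (q : ℝ) ≠ 0 := hQ.ne'
      have h3ne : (3 - r ^ 2 : ℝ) ≠ 0 := h3r.ne'
      have h1r : (1 - r : ℝ) ≠ 0 := by linarith
      have hv : B / D + 2 * ((C - A) / D) * (-1) + 3 * (-B / D) * (-1) ^ 2 +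
          4 * (-C / D) * (-1) ^ 3 = 2 * (1 - r) / (p : ℝ) := by
        rw [hA, hB, hC, hD]
        field_simp
        ring
      rw [hFm1, hv, show (1 + r * (-1) : ℝ) = 1 - r by ring]
      field_simp
      ring
    exact hval ▸ key
  · -- derivative at 1
    have hne : (1 + r * 1 : ℝ) ≠ 0 := by nlinarith
    have hF' : HasDerivAt F
        ((B / D) + 2 * ((C - A) / D) * 1 + 3 * (-B / D) * 1 ^ 2 + 4 * (-C / D) * 1 ^ 3)
        1 := by
      rw [hFfun]; exact quartic_hasDerivAt _ _ _ _ _ _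
    have key := hF'.div (hG 1) hne
    have hΘfun : Θ = fun z : ℝ => F z / (1 + r * z) := funext hΘdef
    rw [hΘfun]
    have hval : ((B / D + 2 * ((C - A) / D) * 1 + 3 * (-B / D) * 1 ^ 2 +
          4 * (-C / D) * 1 ^ 3) * (1 + r * 1) - F 1 * r) / (1 + r * 1) ^ 2
        = -2 / (q : ℝ) := by
      have hpne : (p : ℝ) ≠ 0 := hP.ne'
      have hqne : (q : ℝ) ≠ 0 := hQ.ne'
      have h3ne : (3 - r ^ 2 : ℝ) ≠ 0 := h3r.ne'
      have h1r : (1 + r : ℝ) ≠ 0 := by linarith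
      have hv : B / D + 2 * ((C - A) / D) * 1 + 3 * (-B / D) * 1 ^ 2 +
          4 * (-C / D) * 1 ^ 3 = -(2 * (1 + r)) / (q : ℝ) := by
        rw [hA, hB, hC, hD]
        field_simp
        ring
      rw [hFp1, hv, show (1 + r * 1 : ℝ) = 1 + r by ring]
      field_simp
      ring
    exact hval ▸ key
  · -- extremality
    have hderivF : deriv F = fun x : ℝ =>
        B / D + 2 * ((C - A) / D) * x + 3 * (-B / D) * x ^ 2 + 4 * (-C / D) * x ^ 3 := by
      funext x
      rw [hFfun]
      exact (quartic_hasDerivAt _ _ _ _ _ _).deriv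
    rw [hderivF,
      (cubic_hasDerivAt (B / D) (2 * ((C - A) / D)) (3 * (-B / D)) (4 * (-C / D)) (-1 / r)).deriv]
    rw [hA, hB, hC, hD]
    have hrne : r ≠ 0 := ne_of_gt hr0
    have hpne : (p : ℝ) ≠ 0 := hP.ne'
    have hqne : (q : ℝ) ≠ 0 := hQ.ne'
    have h3ne : (3 - r ^ 2 : ℝ) ≠ 0 := h3r.ne'
    field_simp
    ring
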